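/- arXiv:1302.4683 — 2 statements merged into one kernel-verified Lean document; each statement's English description precedes it below -/
import Mathlib

section
/- Let C be a braided monoidal category, A a unital associative algebra in C, and suppose the pair (U, z) with half-braiding z and r : U → A is compatible with the product of A, and similarly (U', z') with r' : U' → A. Then the full center Z(A), if it exists as terminal among compatible pairs, is unique up to unique isomorphism, and carries a unique algebra structure in the Drinfeld center Z(C) such that ζ_A is an algebra morphism, and this algebra structure is commutative. -/
open CategoryTheory MonoidalCategory

variable {C : Type*} [Category C] [MonoidalCategory C]

/-- A pair consisting of an object `(U, z)` of the Drinfeld center together with a morphism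
`r : U ⟶ A` that is compatible with the product of the algebra `A`, i.e.
`m ∘ (id_A ⊗ r) ∘ z_A = m ∘ (r ⊗ₘ id_A)`. -/
structure CenterCompatiblePair (A : Mon C) where
  /-- the underlying object of the Drinfeld center -/
  Z : CategoryTheory.Center C
  /-- the morphism to `A` -/
  r : Z.1 ⟶ A.X
  compat : (Z.2.β A.X).hom ≫ (A.X ◁ r) ≫ (MonObj.mul : A.X ⊗ A.X ⟶ A.X) = (r ▷ A.X) ≫ (MonObj.mul : A.X ⊗ A.X ⟶ A.X)

/-- A compatible pair `(T, ζ)` is a full center of `A` if it is terminal among compatible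
pairs. -/
def IsFullCenter {A : Mon C} (T : CenterCompatiblePair A) : Prop :=
  ∀ P : CenterCompatiblePair A, ∃! κ : P.Z ⟶ T.Z, κ.f ≫ T.r = P.r

namespace CenterCompatiblePair

variable {A : Mon C}

noncomputable def unitPair (A : Mon C) : CenterCompatiblePair A where
  Z := 𝟙_ (CategoryTheory.Center C)
  r := (MonObj.one (X := A.X))
  compat := by
    show ((λ_ A.X).hom ≫ (ρ_ A.X).inv) ≫ A.X ◁ (MonObj.one (X := A.X)) ≫ MonObj.mul = (MonObj.one (X := A.X)) ▷ A.X ≫ MonObj.mul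
    simp

theorem mulPair_compat (P Q : CenterCompatiblePair A) :
    (((P.Z ⊗ Q.Z) : CategoryTheory.Center C).2.β A.X).hom ≫
        (A.X ◁ ((P.r ⊗ₘ Q.r) ≫ (MonObj.mul (X := A.X)))) ≫ (MonObj.mul (X := A.X))
      = (((P.r ⊗ₘ Q.r) ≫ (MonObj.mul (X := A.X))) ▷ A.X) ≫ (MonObj.mul (X := A.X)) := by
  simp only [Center.tensor_fst, Center.tensor_β, Iso.trans_hom, whiskerLeftIso_hom,
    Iso.symm_hom, whiskerRightIso_hom, Category.assoc]
  calc _ = 𝟙 _ ⊗≫ P.Z.1 ◁ (Q.Z.2.β A.X).hom ⊗≫ ((P.Z.2.β A.X).hom ▷ Q.Z.1) ⊗≫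
        A.X ◁ ((P.r ▷ Q.Z.1) ≫ (A.X ◁ Q.r)) ⊗≫ ((A.X ◁ (MonObj.mul (X := A.X))) ≫ (MonObj.mul (X := A.X))) := by
        rw [MonoidalCategory.tensorHom_def]; monoidal
    _ = 𝟙 _ ⊗≫ P.Z.1 ◁ (Q.Z.2.β A.X).hom ⊗≫
        (((P.Z.2.β A.X).hom ▷ Q.Z.1) ≫ ((A.X ⊗ P.Z.1) ◁ Q.r)) ⊗≫
        A.X ◁ (P.r ▷ A.X) ⊗≫ ((A.X ◁ (MonObj.mul (X := A.X))) ≫ (MonObj.mul (X := A.X))) := by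
        rw [← whisker_exchange]; monoidal
    _ = 𝟙 _ ⊗≫ P.Z.1 ◁ (Q.Z.2.β A.X).hom ⊗≫ ((P.Z.1 ⊗ A.X) ◁ Q.r) ⊗≫
        (((P.Z.2.β A.X).hom ▷ A.X) ≫ ((A.X ◁ P.r) ▷ A.X)) ⊗≫
        ((α_ A.X A.X A.X).hom ≫ (A.X ◁ (MonObj.mul (X := A.X))) ≫ (MonObj.mul (X := A.X))) := by
        rw [← whisker_exchange]; monoidal
    _ = 𝟙 _ ⊗≫ P.Z.1 ◁ (Q.Z.2.β A.X).hom ⊗≫ ((P.Z.1 ⊗ A.X) ◁ Q.r) ⊗≫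
        ((((P.Z.2.β A.X).hom ≫ (A.X ◁ P.r) ≫ (MonObj.mul (X := A.X))) ▷ A.X) ≫ (MonObj.mul (X := A.X))) := by
        rw [← MonObj.mul_assoc]; monoidal
    _ = 𝟙 _ ⊗≫ P.Z.1 ◁ (Q.Z.2.β A.X).hom ⊗≫
        (((P.Z.1 ⊗ A.X) ◁ Q.r) ≫ ((P.r ▷ A.X) ▷ A.X)) ⊗≫ (((MonObj.mul (X := A.X)) ▷ A.X) ≫ (MonObj.mul (X := A.X))) := by
        rw [P.compat]; monoidal
    _ = 𝟙 _ ⊗≫ ((P.Z.1 ◁ (Q.Z.2.β A.X).hom) ≫ (P.r ▷ (A.X ⊗ Q.Z.1))) ⊗≫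
        ((A.X ⊗ A.X) ◁ Q.r) ⊗≫ (((MonObj.mul (X := A.X)) ▷ A.X) ≫ (MonObj.mul (X := A.X))) := by
        rw [whisker_exchange]; monoidal
    _ = 𝟙 _ ⊗≫ (P.r ▷ (Q.Z.1 ⊗ A.X)) ⊗≫
        (A.X ◁ ((Q.Z.2.β A.X).hom ≫ (A.X ◁ Q.r) ≫ (MonObj.mul (X := A.X)))) ≫ (MonObj.mul (X := A.X)) := by
        rw [whisker_exchange, MonObj.mul_assoc]; monoidal
    _ = 𝟙 _ ⊗≫ (P.r ▷ (Q.Z.1 ⊗ A.X)) ⊗≫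
        (A.X ◁ ((Q.r ▷ A.X) ≫ (MonObj.mul (X := A.X)))) ≫ (MonObj.mul (X := A.X)) := by rw [Q.compat]
    _ = (((P.r ⊗ₘ Q.r) ≫ (MonObj.mul (X := A.X))) ▷ A.X) ≫ (MonObj.mul (X := A.X)) := by
        simp only [MonoidalCategory.tensorHom_def, comp_whiskerRight, Category.assoc, MonObj.mul_assoc]; monoidal

noncomputable def mulPair (P Q : CenterCompatiblePair A) : CenterCompatiblePair A where
  Z := P.Z ⊗ Q.Z
  r := (P.r ⊗ₘ Q.r) ≫ (MonObj.mul (X := A.X))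
  compat := mulPair_compat P Q

end CenterCompatiblePair

open CenterCompatiblePair in
/-- **Uniqueness and commutative algebra structure of the full center**: if the full center
`Z(A)` of an algebra `A` in a monoidal category exists (as a terminal object among pairs
compatible with the product of `A`), then it is unique up to unique isomorphism, and it
carries a unique algebra structure in the Drinfeld center such that `ζ_A` is an algebra
morphism; this algebra structure is commutative. -/
theorem fullCenter_unique_and_commutative_algebra
    {A : Mon C} (T : CenterCompatiblePair A) (hT : IsFullCenter T) :
    (∀ T' : CenterCompatiblePair A, IsFullCenter T' →
      ∃! e : T.Z ≅ T'.Z, e.hom.f ≫ T'.r = T.r) ∧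
    (∃! p : (T.Z ⊗ T.Z ⟶ T.Z) × (𝟙_ (CategoryTheory.Center C) ⟶ T.Z),
      -- unit axioms
      ((p.2 ▷ T.Z) ≫ p.1 = (λ_ T.Z).hom) ∧
      ((T.Z ◁ p.2) ≫ p.1 = (ρ_ T.Z).hom) ∧
      -- associativity
      ((p.1 ▷ T.Z) ≫ p.1 = (α_ T.Z T.Z T.Z).hom ≫ (T.Z ◁ p.1) ≫ p.1) ∧
      -- commutativity
      ((β_ T.Z T.Z).hom ≫ p.1 = p.1) ∧
      -- `ζ_A = T.r` is a morphism of algebras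
      (p.1.f ≫ T.r = (T.r ⊗ₘ T.r) ≫ (MonObj.mul : A.X ⊗ A.X ⟶ A.X)) ∧
      (p.2.f ≫ T.r = (MonObj.one : 𝟙_ C ⟶ A.X))) := by
  constructor
  · intro T' hT'
    obtain ⟨κ, hκ, huκ⟩ := hT' T
    obtain ⟨κ', hκ', huκ'⟩ := hT T'
    obtain ⟨ι, hι, huι⟩ := hT T
    obtain ⟨ι', hι', huι'⟩ := hT' T'
    refine ⟨⟨κ, κ', ?_, ?_⟩, hκ, ?_⟩
    · rw [huι (κ ≫ κ') (by simp [hκ', hκ]), huι (𝟙 T.Z) (by simp)]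
    · rw [huι' (κ' ≫ κ) (by simp [hκ, hκ']), huι' (𝟙 T'.Z) (by simp)]
    · intro e he
      exact Iso.ext (huκ e.hom he)
  · obtain ⟨mu, hmu, humu⟩ : ∃! κ : T.Z ⊗ T.Z ⟶ T.Z, κ.f ≫ T.r = (mulPair T T).r := hT (mulPair T T)
    obtain ⟨u, hu, huu⟩ : ∃! κ : 𝟙_ (CategoryTheory.Center C) ⟶ T.Z, κ.f ≫ T.r = (unitPair A).r := hT (unitPair A)
    have hmu' : mu.f ≫ T.r = (T.r ⊗ₘ T.r) ≫ (MonObj.mul (X := A.X)) := hmu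
    have hu' : u.f ≫ T.r = (MonObj.one (X := A.X)) := hu
    -- left unit
    have lu : (u ▷ T.Z) ≫ mu = (λ_ T.Z).hom := by
      obtain ⟨κ, hκ, huκ⟩ := hT (mulPair (unitPair A) T)
      refine (huκ _ ?_).trans (huκ _ ?_).symm
      · show ((u ▷ T.Z) ≫ mu).f ≫ T.r = ((MonObj.one (X := A.X)) ⊗ₘ T.r) ≫ (MonObj.mul (X := A.X))
        simp only [Center.comp_f, Center.whiskerRight_f, Category.assoc, hmu']
        erw [Category.assoc, hmu']
        erw [← hu', ← tensorHom_id, tensorHom_comp_tensorHom_assoc]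
        simp
        rfl
      · show (λ_ T.Z).hom.f ≫ T.r = ((MonObj.one (X := A.X)) ⊗ₘ T.r) ≫ (MonObj.mul (X := A.X))
        simp only [Center.leftUnitor_hom_f]
        rw [tensorHom_def', Category.assoc, MonObj.one_mul]
        simp
        rfl
    -- right unit
    have ru : (T.Z ◁ u) ≫ mu = (ρ_ T.Z).hom := by
      obtain ⟨κ, hκ, huκ⟩ := hT (mulPair T (unitPair A))
      refine (huκ _ ?_).trans (huκ _ ?_).symm
      · show ((T.Z ◁ u) ≫ mu).f ≫ T.r = (T.r ⊗ₘ (MonObj.one (X := A.X))) ≫ (MonObj.mul (X := A.X))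
        simp only [Center.comp_f, Center.whiskerLeft_f, Category.assoc, hmu']
        erw [Category.assoc, hmu']
        erw [← hu', ← id_tensorHom, tensorHom_comp_tensorHom_assoc]
        simp
        rfl
      · show (ρ_ T.Z).hom.f ≫ T.r = (T.r ⊗ₘ (MonObj.one (X := A.X))) ≫ (MonObj.mul (X := A.X))
        simp only [Center.rightUnitor_hom_f]
        rw [MonoidalCategory.tensorHom_def, Category.assoc, MonObj.mul_one]
        simp
        rfl
    -- associativity
    have as : (mu ▷ T.Z) ≫ mu = (α_ T.Z T.Z T.Z).hom ≫ (T.Z ◁ mu) ≫ mu := by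
      obtain ⟨κ, hκ, huκ⟩ := hT (mulPair (mulPair T T) T)
      refine (huκ _ ?_).trans (huκ _ ?_).symm
      · show ((mu ▷ T.Z) ≫ mu).f ≫ T.r = (((T.r ⊗ₘ T.r) ≫ (MonObj.mul (X := A.X))) ⊗ₘ T.r) ≫ (MonObj.mul (X := A.X))
        simp only [Center.comp_f, Center.whiskerRight_f, Category.assoc, hmu']
        erw [Category.assoc, hmu']
        erw [← tensorHom_id, tensorHom_comp_tensorHom_assoc, hmu']
        simp
      · show ((α_ T.Z T.Z T.Z).hom ≫ (T.Z ◁ mu) ≫ mu).f ≫ T.r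
          = (((T.r ⊗ₘ T.r) ≫ (MonObj.mul (X := A.X))) ⊗ₘ T.r) ≫ (MonObj.mul (X := A.X))
        simp only [Center.comp_f, Center.whiskerLeft_f, Center.associator_hom_f,
          Category.assoc, hmu']
        erw [Category.assoc, Category.assoc, hmu']
        erw [← id_tensorHom, tensorHom_comp_tensorHom_assoc, hmu']
        rw [Category.id_comp]
        erw [show (T.r ⊗ₘ ((T.r ⊗ₘ T.r) ≫ (MonObj.mul (X := A.X)))) = (T.r ⊗ₘ (T.r ⊗ₘ T.r)) ≫ (A.X ◁ (MonObj.mul (X := A.X))) by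
          rw [← id_tensorHom, tensorHom_comp_tensorHom, Category.comp_id]]
        rw [show (((T.r ⊗ₘ T.r) ≫ (MonObj.mul (X := A.X))) ⊗ₘ T.r) = ((T.r ⊗ₘ T.r) ⊗ₘ T.r) ≫ ((MonObj.mul (X := A.X)) ▷ A.X) by
          rw [← tensorHom_id, tensorHom_comp_tensorHom, Category.comp_id]]
        erw [Category.assoc, ← associator_naturality_assoc, ← MonObj.mul_assoc]
        simp only [Category.assoc]
        rfl
    -- commutativity
    have comm : (β_ T.Z T.Z).hom ≫ mu = mu := by
      obtain ⟨κ, hκ, huκ⟩ := hT (mulPair T T)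
      refine (huκ _ ?_).trans (huκ _ hmu).symm
      show ((β_ T.Z T.Z).hom ≫ mu).f ≫ T.r = (T.r ⊗ₘ T.r) ≫ (MonObj.mul (X := A.X))
      simp only [Center.comp_f, Category.assoc, hmu']
      rw [show (β_ T.Z T.Z).hom.f = (T.Z.2.β T.Z.1).hom from rfl]
      rw [MonoidalCategory.tensorHom_def]
      simp only [Category.assoc]
      erw [← HalfBraiding.naturality_assoc, T.compat, ← tensorHom_def'_assoc, tensorHom_def_assoc]
    refine ⟨(mu, u), ⟨lu, ru, as, comm, hmu', hu'⟩, ?_⟩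
    rintro ⟨p1, p2⟩ ⟨-, -, -, -, h5, h6⟩
    have e1 : p1 = mu := humu p1 h5
    have e2 : p2 = u := huu p2 h6
    rw [e1, e2]
end

section
/- Let H be a finite-dimensional Hopf algebra over a field k with right cointegral λ and left integral Λ normalized so that λ(Λ) = 1. Then the Frobenius map Φ : H → H*, Φ(h) = λ(S(h) · −) (i.e., Φ = ((λ∘m) ⊗ id_{H*}) ∘ (S ⊗ b_H)), is a linear isomorphism; in particular H is a Frobenius algebra with Frobenius form λ. -/
open scoped TensorProduct

/-- A left integral of a Hopf algebra `H`. -/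
def IsLeftIntegral (k : Type*) {H : Type*} [CommRing k] [Ring H] [HopfAlgebra k H]
    (Λ : H) : Prop :=
  ∀ h : H, h * Λ = Coalgebra.counit (R := k) h • Λ

/-- A right cointegral of a Hopf algebra `H`. -/
def IsRightCointegral (k : Type*) {H : Type*} [CommRing k] [Ring H] [HopfAlgebra k H]
    (lam : Module.Dual k H) : Prop :=
  ∀ h : H,
    TensorProduct.lid k H ((TensorProduct.map lam LinearMap.id) (Coalgebra.comul (R := k) h)) =
      lam h • (1 : H)

section FrobAux

open Coalgebra HopfAlgebra TensorProduct LinearMap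

variable {k H : Type*} [Field k] [Ring H] [HopfAlgebra k H]

/-- Convolution product on `Hom(H, B)`. -/
noncomputable def FrobAux.conv {B : Type*} [Ring B] [Algebra k B] (f g : H →ₗ[k] B) :
    H →ₗ[k] B :=
  LinearMap.mul' k B ∘ₗ TensorProduct.map f g ∘ₗ (Coalgebra.comul : H →ₗ[k] H ⊗[k] H)

/-- Convolution unit. -/
noncomputable def FrobAux.cunit {B : Type*} [Ring B] [Algebra k B] : H →ₗ[k] B :=
  Algebra.linearMap k B ∘ₗ (Coalgebra.counit : H →ₗ[k] k)

namespace FrobAux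

lemma conv_repr {B : Type*} [Ring B] [Algebra k B] (f g : H →ₗ[k] B) {a : H}
    (r : Coalgebra.Repr k a (H × H)) :
    conv f g a = ∑ i ∈ r.index, f (r.left i) * g (r.right i) := by
  simp only [conv, comp_apply, ← r.eq, map_sum, TensorProduct.map_tmul, mul'_apply]

lemma smul_counit_sum {a : H} (r : Coalgebra.Repr k a (H × H)) :
    ∑ i ∈ r.index, Coalgebra.counit (R := k) (r.left i) • r.right i = a := by
  have h := congrArg (TensorProduct.lid k H) (Coalgebra.sum_counit_tmul_eq (R := k) r)
  rw [map_sum] at h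
  simp only [TensorProduct.lid_tmul, one_smul] at h
  exact h

lemma sum_smul_counit {a : H} (r : Coalgebra.Repr k a (H × H)) :
    ∑ i ∈ r.index, Coalgebra.counit (R := k) (r.right i) • r.left i = a := by
  have h := congrArg (TensorProduct.rid k H) (Coalgebra.sum_tmul_counit_eq (R := k) r)
  rw [map_sum] at h
  simp only [TensorProduct.rid_tmul, one_smul] at h
  exact h

lemma cunit_conv {B : Type*} [Ring B] [Algebra k B] (f : H →ₗ[k] B) :
    conv (cunit : H →ₗ[k] B) f = f := by
  ext a
  rw [conv_repr _ _ (ℛ k a)]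
  simp only [cunit, comp_apply, Algebra.linearMap_apply, ← Algebra.smul_def, ← map_smul]
  rw [← map_sum, smul_counit_sum]

lemma conv_cunit {B : Type*} [Ring B] [Algebra k B] (f : H →ₗ[k] B) :
    conv f (cunit : H →ₗ[k] B) = f := by
  ext a
  rw [conv_repr _ _ (ℛ k a)]
  simp only [cunit, comp_apply, Algebra.linearMap_apply]
  have : ∀ x : H, ∀ c : k, f x * algebraMap k B c = c • f x := by
    intro x c
    rw [← Algebra.commutes, ← Algebra.smul_def]
  simp only [this, ← map_smul]
  rw [← map_sum, sum_smul_counit]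

lemma conv_assoc {B : Type*} [Ring B] [Algebra k B] (f g w : H →ₗ[k] B) :
    conv (conv f g) w = conv f (conv g w) := by
  ext a
  have key := Coalgebra.sum_map_tmul_tmul_eq (R := k) f g w a (repr := ℛ k a)
      (a₁ := fun i => ℛ k ((ℛ k a).left i)) (a₂ := fun i => ℛ k ((ℛ k a).right i))
  have key2 := congrArg (LinearMap.mul' k B ∘ₗ LinearMap.lTensor B (LinearMap.mul' k B)) key
  simp only [map_sum, comp_apply, lTensor_tmul, mul'_apply] at key2
  rw [conv_repr (conv f g) w (ℛ k a), conv_repr f (conv g w) (ℛ k a)]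
  calc ∑ i ∈ (ℛ k a).index, conv f g ((ℛ k a).left i) * w ((ℛ k a).right i)
      = ∑ i ∈ (ℛ k a).index, ∑ j ∈ (ℛ k ((ℛ k a).left i)).index,
          f ((ℛ k ((ℛ k a).left i)).left j) *
            (g ((ℛ k ((ℛ k a).left i)).right j) * w ((ℛ k a).right i)) := by
        refine Finset.sum_congr rfl fun i _ => ?_
        rw [conv_repr f g (ℛ k ((ℛ k a).left i)), Finset.sum_mul]
        simp [mul_assoc]
    _ = ∑ i ∈ (ℛ k a).index, ∑ j ∈ (ℛ k ((ℛ k a).right i)).index,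
          f ((ℛ k a).left i) *
            (g ((ℛ k ((ℛ k a).right i)).left j) * w ((ℛ k ((ℛ k a).right i)).right j)) := by
        rw [← key2]
    _ = ∑ i ∈ (ℛ k a).index, f ((ℛ k a).left i) * conv g w ((ℛ k a).right i) := by
        refine Finset.sum_congr rfl fun i _ => ?_
        rw [conv_repr g w (ℛ k ((ℛ k a).right i)), Finset.mul_sum]

end FrobAux

end FrobAux
section FrobAux2

open Coalgebra HopfAlgebra TensorProduct LinearMap FrobAux

variable {k H : Type*} [Field k] [Ring H] [HopfAlgebra k H]

namespace FrobAux

lemma counit_antipode (a : H) :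
    Coalgebra.counit (R := k) (HopfAlgebra.antipode (R := k) a) =
      Coalgebra.counit (R := k) a := by
  have h2 := congrArg (Coalgebra.counit (R := k))
      (HopfAlgebra.sum_antipode_mul_eq_smul (R := k) (ℛ k a))
  simp only [map_sum, Bialgebra.counit_mul, map_smul, Bialgebra.counit_one, smul_eq_mul,
    mul_one] at h2
  conv_lhs => rw [← sum_smul_counit (ℛ k a)]
  simp only [map_sum, map_smul, smul_eq_mul]
  rw [← h2]
  exact Finset.sum_congr rfl fun i _ => mul_comm _ _

/-- The candidate for `comul ∘ antipode`: `(S ⊗ S) ∘ swap ∘ comul`. -/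
noncomputable def TD : H →ₗ[k] H ⊗[k] H :=
  TensorProduct.map (HopfAlgebra.antipode (R := k)) (HopfAlgebra.antipode (R := k)) ∘ₗ
    (TensorProduct.comm k H H).toLinearMap ∘ₗ (Coalgebra.comul : H →ₗ[k] H ⊗[k] H)

lemma TD_repr {a : H} (r : Coalgebra.Repr k a (H × H)) :
    TD a = ∑ i ∈ r.index,
      HopfAlgebra.antipode (R := k) (r.right i) ⊗ₜ[k] HopfAlgebra.antipode (R := k) (r.left i) := by
  simp only [TD, comp_apply, ← r.eq, map_sum, LinearEquiv.coe_coe, comm_tmul,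
    TensorProduct.map_tmul]

lemma conv_SD_comul :
    conv ((Coalgebra.comul : H →ₗ[k] H ⊗[k] H) ∘ₗ HopfAlgebra.antipode (R := k))
      (Coalgebra.comul : H →ₗ[k] H ⊗[k] H) = cunit := by
  ext a
  rw [conv_repr _ _ (ℛ k a)]
  simp only [comp_apply, ← Bialgebra.comul_mul]
  rw [← map_sum (Coalgebra.comul : H →ₗ[k] H ⊗[k] H),
    HopfAlgebra.sum_antipode_mul_eq_smul (R := k) (ℛ k a)]
  simp [cunit, Algebra.algebraMap_eq_smul_one]

/-- Auxiliary trilinear gadget `y ⊗ (u ⊗ v) ↦ (c * S v) ⊗ (y * S u)`. -/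
noncomputable def theta (c : H) : H ⊗[k] (H ⊗[k] H) →ₗ[k] H ⊗[k] H :=
  TensorProduct.map (LinearMap.mulLeft k c ∘ₗ HopfAlgebra.antipode (R := k))
      (LinearMap.mul' k H ∘ₗ LinearMap.lTensor H (HopfAlgebra.antipode (R := k)))
    ∘ₗ (TensorProduct.assoc k H H H).toLinearMap
    ∘ₗ LinearMap.rTensor H (TensorProduct.comm k H H).toLinearMap
    ∘ₗ (TensorProduct.assoc k H H H).symm.toLinearMap
    ∘ₗ LinearMap.lTensor H (TensorProduct.comm k H H).toLinearMap

lemma theta_tmul (c y u v : H) :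
    theta (k := k) c (y ⊗ₜ[k] (u ⊗ₜ[k] v)) =
      (c * HopfAlgebra.antipode (R := k) v) ⊗ₜ[k] (y * HopfAlgebra.antipode (R := k) u) := by
  simp [theta, mul'_apply]

lemma conv_comul_TD :
    conv (Coalgebra.comul : H →ₗ[k] H ⊗[k] H) (TD : H →ₗ[k] H ⊗[k] H) = cunit := by
  ext a
  set r := ℛ k a with hr
  have ID1 := Coalgebra.sum_tmul_tmul_eq (R := k) r (fun i => ℛ k (r.left i))
    (fun i => ℛ k (r.right i))
  set Θ : H ⊗[k] (H ⊗[k] H) →ₗ[k] H ⊗[k] H :=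
    LinearMap.mul' k (H ⊗[k] H) ∘ₗ
      TensorProduct.map LinearMap.id (TD : H →ₗ[k] H ⊗[k] H) ∘ₗ
      (TensorProduct.assoc k H H H).symm.toLinearMap with hΘdef
  have hΘ : ∀ x y z : H, Θ (x ⊗ₜ[k] (y ⊗ₜ[k] z)) = (x ⊗ₜ[k] y) * TD z := by
    intro x y z
    simp [hΘdef, mul'_apply]
  have E1 := congrArg Θ ID1
  simp only [map_sum, hΘ] at E1
  have lhs_eq : conv (Coalgebra.comul : H →ₗ[k] H ⊗[k] H) TD a =
      ∑ i ∈ r.index, ∑ j ∈ (ℛ k (r.left i)).index,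
        ((ℛ k (r.left i)).left j ⊗ₜ[k] (ℛ k (r.left i)).right j) * TD (r.right i) := by
    rw [conv_repr _ _ r]
    refine Finset.sum_congr rfl fun i _ => ?_
    rw [← (ℛ k (r.left i)).eq, Finset.sum_mul]
  have E2 : ∀ i ∈ r.index,
      ∑ m ∈ (ℛ k (r.right i)).index,
        (r.left i ⊗ₜ[k] (ℛ k (r.right i)).left m) * TD ((ℛ k (r.right i)).right m)
      = (r.left i * HopfAlgebra.antipode (R := k) (r.right i)) ⊗ₜ[k] (1 : H) := by
    intro i _
    set r2 := ℛ k (r.right i) with hr2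
    have ID2 := Coalgebra.sum_tmul_tmul_eq (R := k) r2 (fun m => ℛ k (r2.left m))
      (fun m => ℛ k (r2.right m))
    have E := congrArg (theta (k := k) (r.left i)) ID2
    simp only [map_sum, theta_tmul] at E
    calc ∑ m ∈ r2.index, (r.left i ⊗ₜ[k] r2.left m) * TD (r2.right m)
        = ∑ m ∈ r2.index, ∑ n ∈ (ℛ k (r2.right m)).index,
            (r.left i * HopfAlgebra.antipode (R := k) ((ℛ k (r2.right m)).right n)) ⊗ₜ[k]
              (r2.left m * HopfAlgebra.antipode (R := k) ((ℛ k (r2.right m)).left n)) := by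
          refine Finset.sum_congr rfl fun m _ => ?_
          rw [TD_repr (ℛ k (r2.right m)), Finset.mul_sum]
          exact Finset.sum_congr rfl fun n _ => Algebra.TensorProduct.tmul_mul_tmul _ _ _ _
      _ = ∑ m ∈ r2.index, ∑ n ∈ (ℛ k (r2.left m)).index,
            (r.left i * HopfAlgebra.antipode (R := k) (r2.right m)) ⊗ₜ[k]
              ((ℛ k (r2.left m)).left n * HopfAlgebra.antipode (R := k)
                ((ℛ k (r2.left m)).right n)) := E.symm
      _ = ∑ m ∈ r2.index,
            (r.left i * HopfAlgebra.antipode (R := k) (r2.right m)) ⊗ₜ[k]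
              ((Coalgebra.counit (R := k) (r2.left m)) • (1 : H)) := by
          refine Finset.sum_congr rfl fun m _ => ?_
          rw [← TensorProduct.tmul_sum, HopfAlgebra.sum_mul_antipode_eq_smul (R := k)
            (ℛ k (r2.left m))]
      _ = (r.left i * HopfAlgebra.antipode (R := k) (r.right i)) ⊗ₜ[k] (1 : H) := by
          simp only [tmul_smul]
          have hlin := congrArg (((TensorProduct.mk k H H).flip (1 : H)) ∘ₗ
              (LinearMap.mulLeft k (r.left i)) ∘ₗ (HopfAlgebra.antipode (R := k)))
            (smul_counit_sum (k := k) r2)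
          simp only [map_sum, map_smul, comp_apply, flip_apply, mk_apply,
            mulLeft_apply] at hlin
          exact hlin
  rw [lhs_eq, E1, Finset.sum_congr rfl E2, ← TensorProduct.sum_tmul,
    HopfAlgebra.sum_mul_antipode_eq_smul (R := k) r]
  simp [cunit, Algebra.algebraMap_eq_smul_one, smul_tmul', Algebra.TensorProduct.one_def]

end FrobAux

end FrobAux2

section Part3

open Coalgebra HopfAlgebra TensorProduct LinearMap FrobAux

variable {k H : Type*} [Field k] [Ring H] [HopfAlgebra k H]

namespace FrobAux

/-- Anti-comultiplicativity of the antipode. -/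
lemma comul_antipode_eq_TD :
    (Coalgebra.comul : H →ₗ[k] H ⊗[k] H) ∘ₗ HopfAlgebra.antipode (R := k) =
      (TD : H →ₗ[k] H ⊗[k] H) := by
  have h1 := conv_assoc (k := k)
    ((Coalgebra.comul : H →ₗ[k] H ⊗[k] H) ∘ₗ HopfAlgebra.antipode (R := k))
    (Coalgebra.comul : H →ₗ[k] H ⊗[k] H) (TD : H →ₗ[k] H ⊗[k] H)
  rw [conv_SD_comul, conv_comul_TD, cunit_conv, conv_cunit] at h1
  exact h1.symm

lemma comul_antipode_repr {a : H} (r : Coalgebra.Repr k a (H × H)) :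
    Coalgebra.comul (R := k) (HopfAlgebra.antipode (R := k) a) =
      ∑ i ∈ r.index, HopfAlgebra.antipode (R := k) (r.right i) ⊗ₜ[k]
        HopfAlgebra.antipode (R := k) (r.left i) := by
  have := LinearMap.congr_fun (comul_antipode_eq_TD (k := k) (H := H)) a
  simp only [comp_apply] at this
  rw [this, TD_repr r]

variable (lam : Module.Dual k H) (Λ : H)

/-- The contraction gadget `y ⊗ z ↦ ∑ lam (S z * Λ₍₁₎) • (y * Λ₍₂₎)`. -/
noncomputable def Fmap (rΛ : Coalgebra.Repr k Λ (H × H)) : H ⊗[k] H →ₗ[k] H :=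
  TensorProduct.lift (LinearMap.mk₂ k
    (fun y z => ∑ i ∈ rΛ.index,
      lam (HopfAlgebra.antipode (R := k) z * rΛ.left i) • (y * rΛ.right i))
    (fun y y' z => by simp [add_mul, smul_add, Finset.sum_add_distrib])
    (fun c y z => by simp [smul_mul_assoc, Finset.smul_sum, smul_smul, mul_comm])
    (fun y z z' => by simp [map_add, add_mul, add_smul, Finset.sum_add_distrib])
    (fun c y z => by simp [map_smul, smul_mul_assoc, smul_eq_mul, mul_smul, Finset.smul_sum]))

lemma Fmap_tmul (rΛ : Coalgebra.Repr k Λ (H × H)) (y z : H) :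
    Fmap lam Λ rΛ (y ⊗ₜ[k] z) = ∑ i ∈ rΛ.index,
      lam (HopfAlgebra.antipode (R := k) z * rΛ.left i) • (y * rΛ.right i) := by
  simp [Fmap, TensorProduct.lift.tmul]

lemma stepA (hΛint : IsLeftIntegral k Λ) (hlamcoint : IsRightCointegral k lam)
    (hnorm : lam Λ = 1) (rΛ : Coalgebra.Repr k Λ (H × H)) {g : H} (rg : Coalgebra.Repr k g (H × H)) :
    ∑ m ∈ rg.index, ∑ i ∈ rΛ.index,
      lam (HopfAlgebra.antipode (R := k) (rg.right m) * rΛ.left i) •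
        (HopfAlgebra.antipode (R := k) (rg.left m) * rΛ.right i)
      = Coalgebra.counit (R := k) g • (1 : H) := by
  have hΔ : Coalgebra.comul (R := k) (HopfAlgebra.antipode (R := k) g * Λ) =
      ∑ m ∈ rg.index, ∑ i ∈ rΛ.index,
        (HopfAlgebra.antipode (R := k) (rg.right m) * rΛ.left i) ⊗ₜ[k]
          (HopfAlgebra.antipode (R := k) (rg.left m) * rΛ.right i) := by
    rw [Bialgebra.comul_mul, comul_antipode_repr rg, ← rΛ.eq, Finset.sum_mul]
    refine Finset.sum_congr rfl fun m _ => ?_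
    rw [Finset.mul_sum]
    exact Finset.sum_congr rfl fun i _ => Algebra.TensorProduct.tmul_mul_tmul _ _ _ _
  have hc := hlamcoint (HopfAlgebra.antipode (R := k) g * Λ)
  rw [hΔ] at hc
  simp only [map_sum, TensorProduct.map_tmul, _root_.TensorProduct.lid_tmul,
    LinearMap.id_coe, id_eq] at hc
  rw [hc, hΛint (HopfAlgebra.antipode (R := k) g), map_smul, hnorm, smul_eq_mul, mul_one,
    counit_antipode]

/-- The key identity: `∑ lam (S h * Λ₍₁₎) • Λ₍₂₎ = h`. -/
lemma key_identity (hΛint : IsLeftIntegral k Λ) (hlamcoint : IsRightCointegral k lam)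
    (hnorm : lam Λ = 1) (rΛ : Coalgebra.Repr k Λ (H × H)) (h : H) :
    ∑ i ∈ rΛ.index, lam (HopfAlgebra.antipode (R := k) h * rΛ.left i) • rΛ.right i = h := by
  set r := ℛ k h with hrdef
  -- KEY2 : ∑_{j,m} (L_j * S p) ⊗ q = 1 ⊗ h
  have ID := Coalgebra.sum_tmul_tmul_eq (R := k) r (fun j => ℛ k (r.left j))
    (fun j => ℛ k (r.right j))
  set W : H ⊗[k] (H ⊗[k] H) →ₗ[k] H ⊗[k] H :=
    TensorProduct.map (LinearMap.mul' k H ∘ₗ LinearMap.lTensor H (HopfAlgebra.antipode (R := k)))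
        LinearMap.id ∘ₗ (TensorProduct.assoc k H H H).symm.toLinearMap with hWdef
  have hW : ∀ x u z : H, W (x ⊗ₜ[k] (u ⊗ₜ[k] z)) =
      (x * HopfAlgebra.antipode (R := k) u) ⊗ₜ[k] z := by
    intro x u z
    simp [hWdef, mul'_apply]
  have E := congrArg W ID
  simp only [map_sum, hW] at E
  have KEY2 : ∑ j ∈ r.index, ∑ m ∈ (ℛ k (r.right j)).index,
      (r.left j * HopfAlgebra.antipode (R := k) ((ℛ k (r.right j)).left m)) ⊗ₜ[k]
        (ℛ k (r.right j)).right m = (1 : H) ⊗ₜ[k] h := by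
    rw [← E]
    have e1 : ∀ j ∈ r.index, ∑ n ∈ (ℛ k (r.left j)).index,
        ((ℛ k (r.left j)).left n * HopfAlgebra.antipode (R := k) ((ℛ k (r.left j)).right n))
          ⊗ₜ[k] r.right j
        = (Coalgebra.counit (R := k) (r.left j)) • ((1 : H) ⊗ₜ[k] r.right j) := by
      intro j _
      rw [← TensorProduct.sum_tmul, HopfAlgebra.sum_mul_antipode_eq_smul (R := k)
        (ℛ k (r.left j)), smul_tmul']
    rw [Finset.sum_congr rfl e1]
    have hlin := congrArg ((TensorProduct.mk k H H) (1 : H)) (smul_counit_sum (k := k) r)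
    simp only [map_sum, map_smul, mk_apply] at hlin
    exact hlin
  -- now contract with F
  have hFtmul : ∀ y z : H, Fmap lam Λ rΛ (y ⊗ₜ[k] z) = ∑ i ∈ rΛ.index,
      lam (HopfAlgebra.antipode (R := k) z * rΛ.left i) • (y * rΛ.right i) :=
    Fmap_tmul lam Λ rΛ
  have step1 : ∀ j ∈ r.index,
      r.left j * ((Coalgebra.counit (R := k) (r.right j)) • (1 : H)) =
      ∑ m ∈ (ℛ k (r.right j)).index, ∑ i ∈ rΛ.index,
        lam (HopfAlgebra.antipode (R := k) ((ℛ k (r.right j)).right m) * rΛ.left i) •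
          ((r.left j * HopfAlgebra.antipode (R := k) ((ℛ k (r.right j)).left m)) * rΛ.right i) := by
    intro j _
    rw [← stepA lam Λ hΛint hlamcoint hnorm rΛ (ℛ k (r.right j)), Finset.mul_sum]
    refine Finset.sum_congr rfl fun m _ => ?_
    rw [Finset.mul_sum]
    refine Finset.sum_congr rfl fun i _ => ?_
    rw [mul_smul_comm, mul_assoc]
  calc (∑ i ∈ rΛ.index, lam (HopfAlgebra.antipode (R := k) h * rΛ.left i) • rΛ.right i)
      = Fmap lam Λ rΛ ((1 : H) ⊗ₜ[k] h) := by rw [hFtmul]; simp only [one_mul]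
    _ = ∑ j ∈ r.index, ∑ m ∈ (ℛ k (r.right j)).index,
        Fmap lam Λ rΛ ((r.left j * HopfAlgebra.antipode (R := k) ((ℛ k (r.right j)).left m))
          ⊗ₜ[k] (ℛ k (r.right j)).right m) := by
        rw [← KEY2]
        simp only [map_sum]
    _ = ∑ j ∈ r.index, r.left j * ((Coalgebra.counit (R := k) (r.right j)) • (1 : H)) := by
        refine Finset.sum_congr rfl fun j hj => ?_
        rw [step1 j hj]
        exact Finset.sum_congr rfl fun m _ => hFtmul _ _
    _ = h := by
        simp only [mul_smul_comm, mul_one]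
        exact sum_smul_counit (k := k) r

end FrobAux

end Part3

/-- **The Frobenius map of a finite-dimensional Hopf algebra is an isomorphism**: if `Λ` is a
left integral and `lam` a right cointegral with `lam(Λ) = 1`, then the Frobenius map
`Φ : H → H*`, `Φ(h) = lam(S(h) · −)`, is a `k`-linear isomorphism; in particular `H` is a
Frobenius algebra with Frobenius form `lam`. -/
theorem frobeniusMap_bijective
    (k H : Type*) [Field k] [Ring H] [HopfAlgebra k H] [FiniteDimensional k H]
    (Λ : H) (lam : Module.Dual k H)
    (hΛ : Λ ≠ 0) (hlam : lam ≠ 0)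
    (hΛint : IsLeftIntegral k Λ) (hlamcoint : IsRightCointegral k lam)
    (hnorm : lam Λ = 1) :
    ∃ Φ : H ≃ₗ[k] Module.Dual k H,
      ∀ h x : H, Φ h x = lam (HopfAlgebra.antipode (R := k) h * x) := by
  classical
  -- the Frobenius map as a linear map
  let Φ0 : H →ₗ[k] Module.Dual k H :=
    (LinearMap.llcomp k H H k lam) ∘ₗ (LinearMap.mul k H) ∘ₗ HopfAlgebra.antipode (R := k)
  have hΦ0 : ∀ h x : H, Φ0 h x = lam (HopfAlgebra.antipode (R := k) h * x) := by
    intro h x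
    simp [Φ0]
  -- a left inverse
  set rΛ := Coalgebra.Repr.arbitrary k Λ with hrΛ
  let Ψ0 : Module.Dual k H →ₗ[k] H :=
    { toFun := fun f => ∑ i ∈ rΛ.index, f (rΛ.left i) • rΛ.right i
      map_add' := by
        intro f g
        simp [LinearMap.add_apply, add_smul, Finset.sum_add_distrib]
      map_smul' := by
        intro c f
        simp [LinearMap.smul_apply, smul_smul, Finset.smul_sum] }
  have hleft : ∀ h : H, Ψ0 (Φ0 h) = h := by
    intro h
    have := FrobAux.key_identity lam Λ hΛint hlamcoint hnorm rΛ h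
    simp only [Ψ0, LinearMap.coe_mk, AddHom.coe_mk]
    simpa only [hΦ0] using this
  have hinj : Function.Injective Φ0 := Function.LeftInverse.injective hleft
  have hdim : Module.finrank k H = Module.finrank k (Module.Dual k H) :=
    (Subspace.dual_finrank_eq (K := k) (V := H)).symm
  have hsurj : Function.Surjective Φ0 :=
    (LinearMap.injective_iff_surjective_of_finrank_eq_finrank hdim).1 hinj
  refine ⟨LinearEquiv.ofBijective Φ0 ⟨hinj, hsurj⟩, fun h x => ?_⟩
  exact hΦ0 h x
end
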